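/- Consider the generalized top-k selective gossiping trajectory with m ≥ 2 agents, n ≥ 1 candidates, and k ∈ [n], and let X(∞) = lim_{t→∞} X(t) denote the (existing) entrywise limit of the dynamics. For any pair {i₁,i₂} ∈ E of the connectivity graph and any candidate j ∈ S^∞_{i₁i₂}, the two agents consent on j in the limit: X_{i₁j}(∞) = X_{i₂j}(∞). -/
import Mathlib


open Filter Topology

/-- The set of indices of the top-k entries of v: indices j for which fewer
than k entries of v are strictly greater than v j. -/
def topSet {n : ℕ} (k : ℕ) (v : Fin n → ℝ) : Set (Fin n) :=
  {j | Set.ncard {l | v j < v l} < k}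

/-- In the generalized top-k selective gossiping trajectory, for
any edge {i₁,i₂} of the connectivity graph and any candidate j ∈ S^∞_{i₁i₂},
the two agents consent on j in the limit: X_{i₁j}(∞) = X_{i₂j}(∞). -/
theorem stmt9 (m n k : ℕ) (hm : 2 ≤ m) (hk : 1 ≤ k) (hkn : k ≤ n)
    (p q : ℕ → Fin m) (hpq : ∀ t, p t ≠ q t)
    (X : ℕ → Fin m → Fin n → ℝ)
    (S : ℕ → Set (Fin n))
    (hS : ∀ t, S t = topSet k (X t (p t)) ∪ topSet k (X t (q t)))
    (hX1 : ∀ t (i : Fin m) (j : Fin n), (i = p t ∨ i = q t) → j ∈ S t →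
      X (t + 1) i j = (X t (p t) j + X t (q t) j) / 2)
    (hX2 : ∀ t (i : Fin m) (j : Fin n), ¬((i = p t ∨ i = q t) ∧ j ∈ S t) →
      X (t + 1) i j = X t i j)
    (Xinf : Fin m → Fin n → ℝ)
    (hlim : ∀ (i : Fin m) (j : Fin n),
      Tendsto (fun t => X t i j) atTop (𝓝 (Xinf i j))) :
    ∀ i₁ i₂ : Fin m, i₁ ≠ i₂ →
      {t : ℕ | (p t = i₁ ∧ q t = i₂) ∨ (p t = i₂ ∧ q t = i₁)}.Infinite →
      ∀ j : Fin n,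
        {t : ℕ | ((p t = i₁ ∧ q t = i₂) ∨ (p t = i₂ ∧ q t = i₁)) ∧
          j ∈ S t}.Infinite →
        Xinf i₁ j = Xinf i₂ j := by
  intro i₁ i₂ hne _ j hinfS
  set A := {t : ℕ | ((p t = i₁ ∧ q t = i₂) ∨ (p t = i₂ ∧ q t = i₁)) ∧ j ∈ S t} with hA
  have key : ∀ t ∈ A, X (t + 1) i₁ j = X (t + 1) i₂ j := by
    intro t ht
    have h1 : i₁ = p t ∨ i₁ = q t := by
      rcases ht.1 with ⟨h, h'⟩ | ⟨h, h'⟩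
      · exact Or.inl h.symm
      · exact Or.inr h'.symm
    have h2 : i₂ = p t ∨ i₂ = q t := by
      rcases ht.1 with ⟨h, h'⟩ | ⟨h, h'⟩
      · exact Or.inr h'.symm
      · exact Or.inl h.symm
    rw [hX1 t i₁ j h1 ht.2, hX1 t i₂ j h2 ht.2]
  have hmono : StrictMono (fun n => Nat.nth A n + 1) :=
    fun a b hab => Nat.succ_lt_succ ((Nat.nth_lt_nth hinfS).2 hab)
  have hsub : Tendsto (fun n => Nat.nth A n + 1) atTop atTop :=
    hmono.tendsto_atTop
  have l1 : Tendsto (fun s => X (Nat.nth A s + 1) i₁ j) atTop (𝓝 (Xinf i₁ j)) :=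
    (hlim i₁ j).comp hsub
  have l2 : Tendsto (fun s => X (Nat.nth A s + 1) i₂ j) atTop (𝓝 (Xinf i₂ j)) :=
    (hlim i₂ j).comp hsub
  have heq : (fun s => X (Nat.nth A s + 1) i₁ j) = fun s => X (Nat.nth A s + 1) i₂ j := by
    funext s
    exact key _ (Nat.nth_mem_of_infinite hinfS s)
  rw [heq] at l1
  exact tendsto_nhds_unique l1 l2
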